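/- The equivalence relation ∼ on ℤ^d has only finitely many equivalence classes: there exists a finite subset S ⊆ ℤ^d such that every a ∈ ℤ^d satisfies a ∼ s for some s ∈ S. -/

import Mathlib

open Pointwise

/-- The submonoid `ℕA` of `ℤ^d` generated by `a₁,…,a_n`. -/
def NA {d n : ℕ} (a : Fin n → Fin d → ℤ) : AddSubmonoid (Fin d → ℤ) :=
  AddSubmonoid.closure (Set.range a)

/-- The subgroup `G_φ = ℤ(A ∩ τ)` generated by the face `M_φ = {x ∈ ℕA : φ x = 0}`. -/
def Gface {d n : ℕ} (a : Fin n → Fin d → ℤ) (φ : (Fin d → ℤ) →+ ℤ) :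
    AddSubgroup (Fin d → ℤ) :=
  AddSubgroup.closure {x | x ∈ NA a ∧ φ x = 0}

/-- The set `ℕA + G_φ ⊆ ℤ^d`. -/
def faceSum {d n : ℕ} (a : Fin n → Fin d → ℤ) (φ : (Fin d → ℤ) →+ ℤ) :
    Set (Fin d → ℤ) :=
  (NA a : Set (Fin d → ℤ)) + (Gface a φ : Set (Fin d → ℤ))

/-- The relation `x ∼ y`: `E_τ(x) = E_τ(y)` for all faces `τ`. -/
def sim {d n : ℕ} (a : Fin n → Fin d → ℤ) (x y : Fin d → ℤ) : Prop :=
  ∀ φ : (Fin d → ℤ) →+ ℤ, (∀ i, 0 ≤ φ (a i)) →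
    ∀ l : Fin d → ℤ, (∃ k : ℕ, 1 ≤ k ∧ (k : ℤ) • l ∈ Gface a φ) →
      (x - l ∈ faceSum a φ ↔ y - l ∈ faceSum a φ)

section Aux

variable {d n : ℕ} (a : Fin n → Fin d → ℤ)

/-- The subgroup generated by the `a i`, `i ∈ F`. -/
def Gs (F : Set (Fin n)) : AddSubgroup (Fin d → ℤ) :=
  AddSubgroup.closure (a '' F)

lemma NA_phi_nonneg (φ : (Fin d → ℤ) →+ ℤ) (hφ : ∀ i, 0 ≤ φ (a i))
    {x : Fin d → ℤ} (hx : x ∈ NA a) : 0 ≤ φ x := by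
  induction hx using AddSubmonoid.closure_induction with
  | mem y hy => obtain ⟨i, rfl⟩ := hy; exact hφ i
  | zero => simp
  | add y z _ _ hy hz => rw [map_add]; exact add_nonneg hy hz

lemma Gface_eq (φ : (Fin d → ℤ) →+ ℤ) (hφ : ∀ i, 0 ≤ φ (a i)) :
    Gface a φ = Gs a {i | φ (a i) = 0} := by
  apply le_antisymm
  · rw [Gface]
    rw [AddSubgroup.closure_le]
    rintro x ⟨hx1, hx2⟩
    induction hx1 using AddSubmonoid.closure_induction with
    | mem y hy =>
      obtain ⟨i, rfl⟩ := hy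
      exact AddSubgroup.subset_closure ⟨i, hx2, rfl⟩
    | zero => exact zero_mem _
    | add y z hy' hz' hy hz =>
      rw [map_add] at hx2
      have h1 : 0 ≤ φ y := NA_phi_nonneg a φ hφ hy'
      have h2 : 0 ≤ φ z := NA_phi_nonneg a φ hφ hz'
      have hy0 : φ y = 0 := le_antisymm (by omega) h1
      have hz0 : φ z = 0 := le_antisymm (by omega) h2
      exact add_mem (hy hy0) (hz hz0)
  · rw [Gs, AddSubgroup.closure_le]
    rintro x ⟨i, hi, rfl⟩
    exact AddSubgroup.subset_closure ⟨AddSubmonoid.subset_closure ⟨i, rfl⟩, hi⟩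

lemma mem_add_shift (G : AddSubgroup (Fin d → ℤ)) {u v : Fin d → ℤ}
    (h : u - v ∈ G) :
    u ∈ (NA a : Set (Fin d → ℤ)) + (G : Set (Fin d → ℤ)) ↔
      v ∈ (NA a : Set (Fin d → ℤ)) + (G : Set (Fin d → ℤ)) := by
  constructor
  · rintro ⟨p, hp, q, hq, hpq⟩
    have hpq' : p + q = u := hpq
    refine ⟨p, hp, q - (u - v), sub_mem hq h, ?_⟩
    rw [← hpq']; module
  · rintro ⟨p, hp, q, hq, hpq⟩
    have hpq' : p + q = v := hpq
    refine ⟨p, hp, q + (u - v), add_mem hq h, ?_⟩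
    rw [← hpq']; module

/-- The torsion subgroup of the quotient by `Gs a F`. -/
noncomputable abbrev Ts (F : Set (Fin n)) :=
  AddCommGroup.torsion ((Fin d → ℤ) ⧸ Gs a F)

lemma finite_Ts (F : Set (Fin n)) : Finite (Ts a F) := by
  haveI : AddGroup.FG (Fin d → ℤ) := Module.Finite.iff_addGroup_fg.mp inferInstance
  haveI : AddGroup.FG ((Fin d → ℤ) ⧸ Gs a F) := inferInstance
  haveI : Module.Finite ℤ ((Fin d → ℤ) ⧸ Gs a F) := Module.Finite.iff_addGroup_fg.mpr ‹_›
  have hfg : (AddSubgroup.toIntSubmodule (Ts a F)).FG := IsNoetherian.noetherian _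
  rw [Submodule.fg_iff_addSubgroup_fg, AddSubgroup.toIntSubmodule_toAddSubgroup] at hfg
  haveI : AddGroup.FG (Ts a F) := (AddGroup.fg_iff_addSubgroup_fg _).mpr hfg
  apply AddCommGroup.finite_of_fg_torsion
  intro x
  obtain ⟨m, hm, hx⟩ := isOfFinAddOrder_iff_nsmul_eq_zero.mp x.2
  exact isOfFinAddOrder_iff_nsmul_eq_zero.mpr
    ⟨m, hm, Subtype.ext (by rw [AddSubgroup.coe_nsmul]; exact hx)⟩

/-- A representative in `ℤ^d` of a torsion element of the quotient. -/
noncomputable def rep {F : Set (Fin n)} (t : Ts a F) : Fin d → ℤ :=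
  Quotient.out (t : (Fin d → ℤ) ⧸ Gs a F)

lemma mk_rep {F : Set (Fin n)} (t : Ts a F) :
    (rep a t : (Fin d → ℤ) ⧸ Gs a F) = (t : (Fin d → ℤ) ⧸ Gs a F) :=
  Quotient.out_eq _

/-- The fingerprint of `x`: for each subset `F`, the set of torsion elements `t`
whose representative shifts `x` into `ℕA + Gs F`. -/
noncomputable def fp (x : Fin d → ℤ) : (F : Set (Fin n)) → Set (Ts a F) :=
  fun F => {t | x - rep a t ∈ (NA a : Set (Fin d → ℤ)) + (Gs a F : Set (Fin d → ℤ))}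

lemma sim_of_fp_eq {x y : Fin d → ℤ} (h : fp a x = fp a y) : sim a x y := by
  intro φ hφ l hl
  obtain ⟨k, hk, hkl⟩ := hl
  set F : Set (Fin n) := {i | φ (a i) = 0} with hF
  have hG : Gface a φ = Gs a F := Gface_eq a φ hφ
  rw [hG] at hkl
  have hface : faceSum a φ =
      (NA a : Set (Fin d → ℤ)) + (Gs a F : Set (Fin d → ℤ)) := by
    rw [faceSum, hG]
  -- the class of `l` is torsion
  have hl0 : (k : ℕ) • ((l : (Fin d → ℤ) ⧸ Gs a F)) = 0 := by
    rw [← QuotientAddGroup.mk_nsmul]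
    rw [QuotientAddGroup.eq_zero_iff]
    simpa using hkl
  have ht : IsOfFinAddOrder ((l : (Fin d → ℤ) ⧸ Gs a F)) :=
    isOfFinAddOrder_iff_nsmul_eq_zero.mpr ⟨k, hk, hl0⟩
  set t : Ts a F := ⟨(l : (Fin d → ℤ) ⧸ Gs a F), ht⟩ with htdef
  have hrep : rep a t - l ∈ Gs a F := by
    have h1 : ((rep a t : Fin d → ℤ) : (Fin d → ℤ) ⧸ Gs a F) = (l : (Fin d → ℤ) ⧸ Gs a F) :=
      mk_rep a t
    have h2 := (QuotientAddGroup.eq).mp h1.symm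
    simpa [neg_add_eq_sub] using h2
  have key : ∀ z : Fin d → ℤ,
      (z - l ∈ faceSum a φ ↔ t ∈ fp a z F) := by
    intro z
    rw [hface]
    have : (z - l) - (z - rep a t) = rep a t - l := by abel
    rw [mem_add_shift a (Gs a F) (by rw [this]; exact hrep)]
    rfl
  rw [key x, key y, h]

end Aux

/-- The relation `∼` has only finitely many equivalence classes:
there is a finite set `S ⊆ ℤ^d` such that every `x ∈ ℤ^d` satisfies `x ∼ s` for
some `s ∈ S`. -/
theorem sim_finitely_many_classes {d n : ℕ} (hd : 0 < d) (hn : 0 < n)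
    (a : Fin n → Fin d → ℤ) (hgen : AddSubgroup.closure (Set.range a) = ⊤) :
    ∃ S : Finset (Fin d → ℤ), ∀ x : Fin d → ℤ, ∃ s ∈ S, sim a x s := by
  classical
  haveI : ∀ F : Set (Fin n), Finite (Ts a F) := finite_Ts a
  haveI : Finite ((F : Set (Fin n)) → Set (Ts a F)) := inferInstance
  let g : ((F : Set (Fin n)) → Set (Ts a F)) → (Fin d → ℤ) :=
    fun p => if h : ∃ x, fp a x = p then h.choose else 0
  refine ⟨(Set.finite_range g).toFinset, fun x => ?_⟩
  refine ⟨g (fp a x), (Set.Finite.mem_toFinset _).mpr ⟨fp a x, rfl⟩, ?_⟩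
  have hex : ∃ z, fp a z = fp a x := ⟨x, rfl⟩
  have hgx : fp a (g (fp a x)) = fp a x := by
    simp only [g, dif_pos hex]
    exact hex.choose_spec
  exact sim_of_fp_eq a hgx.symm
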